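/- For every integer P ≥ 1, set L = 2^P. For every pair of integers (a, b) with 1 ≤ a < b ≤ L, there exists exactly one integer i with 1 ≤ i ≤ L − 1 such that, writing U = 2^{ν₂(i)}, both i − U + 1 ≤ a ≤ i and i + 1 ≤ b ≤ i + U hold. Moreover this unique i satisfies a ≤ i < b. -/

import Mathlib

private lemma testBit_div_pow (x k j : ℕ) : (x / 2 ^ k).testBit j = x.testBit (k + j) := by
  rw [Nat.testBit_eq_decide_div_mod_eq, Nat.testBit_eq_decide_div_mod_eq, Nat.div_div_eq_div_mul, ← pow_add]

private lemma xor_div_pow (x y k : ℕ) : (x ^^^ y) / 2 ^ k = x / 2 ^ k ^^^ y / 2 ^ k := by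
  apply Nat.eq_of_testBit_eq
  intro j
  rw [testBit_div_pow, Nat.testBit_xor, Nat.testBit_xor, testBit_div_pow, testBit_div_pow]

private lemma tile_key (i j : ℕ) (hij : i < j)
    (h1 : j - i < 2 ^ padicValNat 2 i) (h2 : j - i < 2 ^ padicValNat 2 j) : False := by
  rcases le_total (padicValNat 2 i) (padicValNat 2 j) with h | h
  · have d1 : 2 ^ padicValNat 2 i ∣ i := pow_padicValNat_dvd
    have d2 : 2 ^ padicValNat 2 i ∣ j := (pow_dvd_pow 2 h).trans pow_padicValNat_dvd
    have := Nat.le_of_dvd (by omega) (Nat.dvd_sub d2 d1)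
    omega
  · have d1 : 2 ^ padicValNat 2 j ∣ i := (pow_dvd_pow 2 h).trans pow_padicValNat_dvd
    have d2 : 2 ^ padicValNat 2 j ∣ j := pow_padicValNat_dvd
    have := Nat.le_of_dvd (by omega) (Nat.dvd_sub d2 d1)
    omega

private lemma tile_exists (x y : ℕ) (h : x < y) :
    ∃ i : ℕ, x < i ∧ i ≤ y ∧ i ≤ x + 2 ^ padicValNat 2 i ∧ y < i + 2 ^ padicValNat 2 i := by
  have hm : x ^^^ y ≠ 0 := by
    simp only [ne_eq, xor_eq_zero_iff]; omega
  set m := x ^^^ y with hmdef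
  set v := m.log2 with hv
  have h1 : 2 ^ v ≤ m := Nat.log2_self_le hm
  have h2 : m < 2 ^ (v + 1) := Nat.lt_log2_self
  set W := 2 ^ v with hW
  have hWpos : 0 < W := by positivity
  have hW2 : 2 ^ (v + 1) = 2 * W := by rw [hW]; ring
  have hmv : m / W = 1 := Nat.div_eq_of_lt_le (by omega) (by omega)
  set p := x / W with hp
  set q := y / W with hq
  have hxor := xor_div_pow x y v
  rw [← hW, ← hmdef, hmv] at hxor
  have hpq : p ^^^ q = 1 := hxor.symm
  have hpq2 : p / 2 = q / 2 := by
    have h3 := xor_div_pow p q 1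
    rw [hpq] at h3
    simp only [pow_one] at h3
    norm_num at h3
    exact xor_eq_zero_iff.mp h3.symm
  have hne : p ≠ q := by
    intro he; rw [he, Nat.xor_self] at hpq; omega
  have hle : p ≤ q := Nat.div_le_div_right h.le
  have hpar : p % 2 = 0 ∧ q % 2 = 1 := by omega
  set c := p / 2 with hc
  have hp2 : p = 2 * c := by omega
  have hq2 : q = 2 * c + 1 := by omega
  set D := W * (2 * c) with hD
  have hx : x = D + x % W := by
    have h4 := Nat.div_add_mod x W
    rw [← hp] at h4
    have h5 : W * p = D := by rw [hD, hp2]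
    omega
  have hy : y = D + W + y % W := by
    have h4 := Nat.div_add_mod y W
    rw [← hq] at h4
    have h5 : W * q = D + W := by rw [hD, hq2]; ring
    omega
  have hxr : x % W < W := Nat.mod_lt _ hWpos
  have hyr : y % W < W := Nat.mod_lt _ hWpos
  refine ⟨D + W, ?_⟩
  have hiW : D + W = W * (2 * c + 1) := by rw [hD]; ring
  have hval : padicValNat 2 (D + W) = v := by
    rw [hiW, hW, padicValNat.mul (by positivity) (by omega), padicValNat.prime_pow,
      padicValNat.eq_zero_of_not_dvd (by omega), add_zero]
  rw [hval, ← hW]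
  omega


/-- Flash Inference tiling: every strictly-lower-triangular contribution pair `(a, b)`
with `1 ≤ a < b ≤ L = 2 ^ P` is covered by exactly one gray tile, i.e. there is a unique
iteration `i ∈ [1, L - 1]` such that, with `U = 2 ^ ν₂ i`, we have
`i - U + 1 ≤ a ≤ i` and `i + 1 ≤ b ≤ i + U`; moreover this `i` satisfies `a ≤ i < b`. -/
theorem flash_inference_tiles_cover_exactly_once (P : ℕ) (hP : 1 ≤ P) (a b : ℕ)
    (ha : 1 ≤ a) (hab : a < b) (hb : b ≤ 2 ^ P) :
    ∃! i : ℕ, 1 ≤ i ∧ i ≤ 2 ^ P - 1 ∧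
      i - 2 ^ (padicValNat 2 i) + 1 ≤ a ∧ a ≤ i ∧
      i + 1 ≤ b ∧ b ≤ i + 2 ^ (padicValNat 2 i) := by
  obtain ⟨i, hi1, hi2, hi3, hi4⟩ := tile_exists (a - 1) (b - 1) (by omega)
  have hUi : 0 < 2 ^ padicValNat 2 i := by positivity
  refine ⟨i, ⟨by omega, by omega, by omega, by omega, by omega, by omega⟩, ?_⟩
  rintro j ⟨hj1, hj2, hj3, hj4, hj5, hj6⟩
  have hUj : 0 < 2 ^ padicValNat 2 j := by positivity
  by_contra hne
  rcases Nat.lt_or_ge i j with hij | hij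
  · exact tile_key i j hij (by omega) (by omega)
  · exact tile_key j i (by omega) (by omega) (by omega)
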